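/- Let Γ₁, Γ₂ be the graphs of Example 5.5 (Γ₁ a directed path u₁ → u₂ → u₃; Γ₂ two parallel edges f₁, f₂ from v₁ to v₂). The assignment Ω_{u₁} = Z_{v₁}, Ω_{u₂} = Z_{f₁}, Ω_{u₃} = Z_{f₂}, T_{e₁} = Z(f₁, s(f₁)), T_{e₂} = Z(f₂, f₁) is a nondegenerate dynamical Cuntz–Krieger Γ₁-family in the boundary path groupoid G_{Γ₂}, and it does not satisfy condition (a) of Theorem 4.1 (since Ω_{u₂} Z_{v₂} = Z_{f₁} is neither empty nor all of Z_{v₂}), hence it does not arise from an admissible relation morphism. -/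

import Mathlib

/-- A directed graph. -/
structure DGraph where
  V : Type
  E : Type
  r : E → V
  s : E → V

namespace DGraph

variable (Γ : DGraph)

/-- A vertex is regular if it receives a finite nonzero number of edges. -/
def Regular (v : Γ.V) : Prop :=
  {e | Γ.r e = v}.Finite ∧ {e | Γ.r e = v}.Nonempty

/-- Compatibility of a list of edges (written from range to source) with a final
source vertex: consecutive edges are composable and the last edge starts at the
given vertex. -/
def compat : List Γ.E → Γ.V → Prop
  | [], _ => True
  | [e], v => Γ.s e = v
  | e :: f :: rest, v => Γ.s e = Γ.r f ∧ compat (f :: rest) v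

/-- A finite path in a graph: a composable list of edges together with its source
vertex (paths of length zero are vertices). -/
structure FinPath where
  edges : List Γ.E
  src : Γ.V
  ok : Γ.compat edges src

/-- The range of a finite path. -/
def FinPath.rng (x : FinPath Γ) : Γ.V :=
  match x.edges with
  | [] => x.src
  | e :: _ => Γ.r e

/-- A vertex regarded as a path of length zero. -/
def ofVtx (v : Γ.V) : FinPath Γ := ⟨[], v, trivial⟩

/-- An edge regarded as a path of length one. -/
def ofEdge (e : Γ.E) : FinPath Γ := ⟨[e], Γ.s e, rfl⟩


theorem compat_append (L₁ L₂ : List Γ.E) (v w : Γ.V)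
    (h1 : Γ.compat L₁ v) (h2 : Γ.compat L₂ w)
    (hlink : v = (match L₂ with | [] => w | e :: _ => Γ.r e)) :
    Γ.compat (L₁ ++ L₂) w := by
  induction L₁ with
  | nil => simpa using h2
  | cons e L₁' ih =>
    cases L₁' with
    | nil =>
      cases L₂ with
      | nil =>
        show Γ.compat [e] w
        have : Γ.s e = v := h1
        simpa [compat] using this.trans hlink
      | cons f L₂' =>
        refine ⟨?_, h2⟩
        · simp only [compat] at h1
          exact h1.trans (by simpa using hlink)
    | cons f L₁'' =>
      obtain ⟨hef, hrest⟩ := h1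
      exact ⟨hef, ih hrest⟩


theorem compat_append' (x y : FinPath Γ) (h : x.src = y.rng) :
    Γ.compat (x.edges ++ y.edges) y.src := by
  obtain ⟨L, v, hc⟩ := y
  cases L with
  | nil => exact Γ.compat_append _ _ _ _ x.ok hc (by simpa [FinPath.rng] using h)
  | cons e tl => exact Γ.compat_append _ _ x.src _ x.ok hc (by simpa [FinPath.rng] using h)

/-- Concatenation of finite paths (`x.comp y` traverses `y` first, then `x`). -/
def FinPath.comp (x y : FinPath Γ) (h : x.src = y.rng) : FinPath Γ :=
  ⟨x.edges ++ y.edges, y.src, Γ.compat_append' x y h⟩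

/-- `x ⪯ x'`: `x` is an initial segment of `x'`, that is, `x' = x y`. -/
def IsPrefix (x x' : FinPath Γ) : Prop :=
  ∃ (y : FinPath Γ) (h : x.src = y.rng), x' = FinPath.comp Γ x y h

/-- An infinite path: a sequence of composable edges, written from range to
source. -/
structure InfPath where
  seq : ℕ → Γ.E
  ok : ∀ n, Γ.s (seq n) = Γ.r (seq (n + 1))

/-- A boundary path: a finite path whose source is a singular vertex, or an
infinite path. -/
inductive BPath where
  | fin : (p : FinPath Γ) → ¬ Γ.Regular p.src → BPath
  | inf : InfPath Γ → BPath

/-- The range of a boundary path. -/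
def BPath.rng : BPath Γ → Γ.V
  | .fin p _ => p.rng
  | .inf p => Γ.r (p.seq 0)

/-- Prepend a finite list of edges to an infinite edge sequence. -/
def prependSeq (L : List Γ.E) (σ : ℕ → Γ.E) : ℕ → Γ.E :=
  fun n => if h : n < L.length then L.get ⟨n, h⟩ else σ (n - L.length)


theorem compat_get : ∀ (L : List Γ.E) (v : Γ.V), Γ.compat L v →
    ∀ (i : ℕ) (hi : i + 1 < L.length),
      Γ.s (L.get ⟨i, Nat.lt_of_succ_lt hi⟩) = Γ.r (L.get ⟨i + 1, hi⟩)
  | [], v, hc, i, hi => by simp at hi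
  | [e], v, hc, i, hi => by simp at hi
  | e :: f :: rest, v, hc, 0, hi => hc.1
  | e :: f :: rest, v, hc, (m+1), hi =>
      compat_get (f :: rest) v hc.2 m (by simpa using hi)

theorem compat_last : ∀ (L : List Γ.E) (v : Γ.V), Γ.compat L v →
    ∀ (h : 0 < L.length), Γ.s (L.get ⟨L.length - 1, by omega⟩) = v
  | [], v, hc, h => by simp at h
  | [e], v, hc, h => hc
  | e :: f :: rest, v, hc, h =>
      compat_last (f :: rest) v hc.2 (by simp)

theorem prependSeq_ok (L : List Γ.E) (v : Γ.V) (hc : Γ.compat L v)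
    (σ : ℕ → Γ.E) (hσ : ∀ n, Γ.s (σ n) = Γ.r (σ (n + 1))) (hv : v = Γ.r (σ 0)) :
    ∀ n, Γ.s (Γ.prependSeq L σ n) = Γ.r (Γ.prependSeq L σ (n + 1)) := by
  intro n
  unfold prependSeq
  by_cases h1 : n < L.length
  · by_cases h2 : n + 1 < L.length
    · rw [dif_pos h1, dif_pos h2]
      exact Γ.compat_get L v hc n h2
    · have hlen : n + 1 = L.length := by omega
      rw [dif_pos h1, dif_neg h2]
      have : n + 1 - L.length = 0 := by omega
      rw [this]
      have hlast := Γ.compat_last L v hc (by omega)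
      have : (⟨n, h1⟩ : Fin L.length) = ⟨L.length - 1, by omega⟩ := by
        apply Fin.ext; simp; omega
      rw [this, hlast, hv]
  · have h2 : ¬ (n + 1 < L.length) := by omega
    rw [dif_neg h1, dif_neg h2]
    have : n + 1 - L.length = (n - L.length) + 1 := by omega
    rw [this]
    exact hσ _

/-- Concatenation `x z` of a finite path `x` with a boundary path `z` with
`r(z) = s(x)`. -/
def BPath.cons (x : FinPath Γ) (z : BPath Γ) (h : x.src = z.rng) : BPath Γ :=
  match z, h with
  | .fin p hp, h =>
      .fin ⟨x.edges ++ p.edges, p.src, Γ.compat_append' x p h⟩ hp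
  | .inf p, h => .inf ⟨Γ.prependSeq x.edges p.seq, Γ.prependSeq_ok x.edges x.src x.ok p.seq p.ok h⟩

/-- The cylinder set `Z_x ⊆ ∂Γ` of boundary paths extending the finite path
`x`. -/
def cyl (x : FinPath Γ) : Set (BPath Γ) :=
  {z | ∃ (z' : BPath Γ) (h : x.src = z'.rng), z = BPath.cons Γ x z' h}

/-- The cylinder set `Z_v ⊆ ∂Γ` of boundary paths with range `v`. -/
def cylV (v : Γ.V) : Set (BPath Γ) := {z | z.rng = v}

/-- The cylinder topology on the boundary path space. -/
instance : TopologicalSpace (BPath Γ) :=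
  TopologicalSpace.generateFrom
    {S | ∃ (x : FinPath Γ) (F : Set (FinPath Γ)), F.Finite ∧
      S = Γ.cyl x \ ⋃ y ∈ F, Γ.cyl y}

/-- The arrows of the boundary path groupoid `G_Γ`: triples
`(x z, |x| - |y|, y z)`. -/
def GArr : Set (BPath Γ × ℤ × BPath Γ) :=
  {t | ∃ (x y : FinPath Γ) (z : BPath Γ) (hx : x.src = z.rng) (hy : y.src = z.rng),
    t.1 = BPath.cons Γ x z hx ∧ t.2.2 = BPath.cons Γ y z hy ∧
    t.2.1 = (x.edges.length : ℤ) - (y.edges.length : ℤ)}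

/-- The arrow space of the boundary path groupoid. -/
def GArrT := {t : BPath Γ × ℤ × BPath Γ // t ∈ Γ.GArr}

instance : TopologicalSpace (GArrT Γ) :=
  inferInstanceAs (TopologicalSpace {t : BPath Γ × ℤ × BPath Γ // t ∈ Γ.GArr})

/-- The range map of the boundary path groupoid. -/
def grng (t : GArrT Γ) : BPath Γ := t.val.1

/-- The source map of the boundary path groupoid. -/
def gsrc (t : GArrT Γ) : BPath Γ := t.val.2.2

/-- The basic compact-open bisection `Z(x,y)` of the boundary path groupoid. -/
def ZZ (x y : FinPath Γ) : Set (GArrT Γ) :=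
  {t | ∃ (z : BPath Γ) (hx : x.src = z.rng) (hy : y.src = z.rng),
    t.val = (BPath.cons Γ x z hx,
      (x.edges.length : ℤ) - (y.edges.length : ℤ), BPath.cons Γ y z hy)}

/-- The product of two subsets of the boundary path groupoid. -/
def gmul (A B : Set (GArrT Γ)) : Set (GArrT Γ) :=
  {c | ∃ a ∈ A, ∃ b ∈ B, a.val.2.2 = b.val.1 ∧
    c.val = (a.val.1, a.val.2.1 + b.val.2.1, b.val.2.2)}

/-- A subset of the boundary path space regarded as a subset of the unit space of
the boundary path groupoid. -/
def unitSet (S : Set (BPath Γ)) : Set (GArrT Γ) :=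
  {t | t.val.2.1 = 0 ∧ t.val.1 = t.val.2.2 ∧ t.val.1 ∈ S}

end DGraph

namespace DGraph

variable (Γ₁ Γ₂ : DGraph)

/-- A relation morphism between two graphs
(Definition 3.1 of Castro–D'Andrea–Hajac): a relation on finite path spaces whose
preimage of vertices consists of vertices and which preserves sources and
ranges. -/
structure IsRelMor (R : Set (FinPath Γ₁ × FinPath Γ₂)) : Prop where
  vtx : ∀ p ∈ R, p.2.edges = [] → p.1.edges = []
  src_mem : ∀ p ∈ R, (ofVtx Γ₁ p.1.src, ofVtx Γ₂ p.2.src) ∈ R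
  rng_mem : ∀ p ∈ R, (ofVtx Γ₁ p.1.rng, ofVtx Γ₂ p.2.rng) ∈ R

/-- Multiplicativity of a relation morphism. -/
def Multiplicative (R : Set (FinPath Γ₁ × FinPath Γ₂)) : Prop :=
  ∀ (x : FinPath Γ₁) (y : FinPath Γ₂) (x' : FinPath Γ₁) (y' : FinPath Γ₂)
    (hx : x.src = x'.rng) (hy : y.src = y'.rng),
    (x, y) ∈ R → (x', y') ∈ R → (FinPath.comp Γ₁ x x' hx, FinPath.comp Γ₂ y y' hy) ∈ R

/-- Decomposability of a relation morphism. -/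
def Decomposable (R : Set (FinPath Γ₁ × FinPath Γ₂)) : Prop :=
  ∀ (y y' : FinPath Γ₂) (h : y.src = y'.rng) (xb : FinPath Γ₁),
    (xb, FinPath.comp Γ₂ y y' h) ∈ R → ∃ (x x' : FinPath Γ₁) (hx : x.src = x'.rng),
      (x, y) ∈ R ∧ (x', y') ∈ R ∧ FinPath.comp Γ₁ x x' hx = xb

/-- Properness of a relation morphism: all preimages are finite. -/
def ProperRel (R : Set (FinPath Γ₁ × FinPath Γ₂)) : Prop :=
  ∀ y : FinPath Γ₂, {x | (x, y) ∈ R}.Finite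

/-- Vertex disjointness of a relation morphism. -/
def VertexDisjoint (R : Set (FinPath Γ₁ × FinPath Γ₂)) : Prop :=
  ∀ v v' : Γ₂.V, v ≠ v' →
    {x | (x, ofVtx Γ₂ v) ∈ R} ∩ {x | (x, ofVtx Γ₂ v') ∈ R} = ∅

/-- Source bijectivity of a relation morphism. -/
def SourceBijective (R : Set (FinPath Γ₁ × FinPath Γ₂)) : Prop :=
  ∀ f : Γ₂.E,
    Set.BijOn (fun x : FinPath Γ₁ => ofVtx Γ₁ x.src)
      {x | (x, ofEdge Γ₂ f) ∈ R} {x | (x, ofVtx Γ₂ (Γ₂.s f)) ∈ R}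

/-- Monotonicity of a relation morphism. -/
def MonotoneRel (R : Set (FinPath Γ₁ × FinPath Γ₂)) : Prop :=
  ∀ (x x' : FinPath Γ₁) (f f' : Γ₂.E),
    (x, ofEdge Γ₂ f) ∈ R → (x', ofEdge Γ₂ f') ∈ R →
    (IsPrefix Γ₁ x x' ∨ IsPrefix Γ₁ x' x) → x = x' ∧ f = f'

/-- Regularity of a relation morphism. -/
def RegularRel (R : Set (FinPath Γ₁ × FinPath Γ₂)) : Prop :=
  ∀ v : Γ₂.V, Γ₂.Regular v →
    ∀ u : Γ₁.V, (ofVtx Γ₁ u, ofVtx Γ₂ v) ∈ R →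
      ∀ x : FinPath Γ₁, x.rng = u → ∃ (f : Γ₂.E) (x' : FinPath Γ₁),
        Γ₂.r f = v ∧ (x', ofEdge Γ₂ f) ∈ R ∧
        (IsPrefix Γ₁ x x' ∨ IsPrefix Γ₁ x' x)

/-- An admissible relation morphism
(Definition 6.5 of Castro–D'Andrea–Hajac). -/
structure IsAdmissible (R : Set (FinPath Γ₁ × FinPath Γ₂)) : Prop where
  relMor : IsRelMor Γ₁ Γ₂ R
  mult : Multiplicative Γ₁ Γ₂ R
  decomp : Decomposable Γ₁ Γ₂ R
  proper : ProperRel Γ₁ Γ₂ R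
  vdisj : VertexDisjoint Γ₁ Γ₂ R
  sbij : SourceBijective Γ₁ Γ₂ R
  mono : MonotoneRel Γ₁ Γ₂ R
  regular : RegularRel Γ₁ Γ₂ R

/-- The vertex sets `Ω_v = ⋃_{u ∈ R⁻¹(v)} Z_u` associated to a relation
morphism. -/
def relΩ (R : Set (FinPath Γ₁ × FinPath Γ₂)) (v : Γ₂.V) : Set (BPath Γ₁) :=
  ⋃ u ∈ {u : Γ₁.V | (ofVtx Γ₁ u, ofVtx Γ₂ v) ∈ R}, cylV Γ₁ u

/-- The bisections `T_f = ⋃_{x ∈ R⁻¹(f)} Z(x, s(x))` associated to a relation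
morphism. -/
def relT (R : Set (FinPath Γ₁ × FinPath Γ₂)) (f : Γ₂.E) : Set (GArrT Γ₁) :=
  ⋃ x ∈ {x : FinPath Γ₁ | (x, ofEdge Γ₂ f) ∈ R}, ZZ Γ₁ x (ofVtx Γ₁ x.src)

/-- A dynamical Cuntz--Krieger `Γ₂`-family in the boundary path groupoid
`G_{Γ₁}`. -/
structure IsDCKb (Ω : Γ₂.V → Set (BPath Γ₁)) (T : Γ₂.E → Set (GArrT Γ₁)) :
    Prop where
  compact_Ω : ∀ v, IsCompact (Ω v)
  open_Ω : ∀ v, IsOpen (Ω v)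
  compact_T : ∀ f, IsCompact (T f)
  open_T : ∀ f, IsOpen (T f)
  inj_r : ∀ f, Set.InjOn (grng Γ₁) (T f)
  inj_s : ∀ f, Set.InjOn (gsrc Γ₁) (T f)
  disj : ∀ v w, v ≠ w → Ω v ∩ Ω w = ∅
  src_eq : ∀ f, gsrc Γ₁ '' T f = Ω (Γ₂.s f)
  rng_sub : ∀ f, grng Γ₁ '' T f ⊆ Ω (Γ₂.r f)
  rng_disj : ∀ f g, f ≠ g → grng Γ₁ '' T f ∩ grng Γ₁ '' T g = ∅
  reg : ∀ v, Γ₂.Regular v → (⋃ f ∈ {f | Γ₂.r f = v}, grng Γ₁ '' T f) = Ω v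

end DGraph

/-- The graph `Γ₁` of Example 5.5: a directed path `u₁ → u₂ → u₃`. -/
abbrev Γ1ex : DGraph := ⟨Fin 3, Fin 2, Fin.succ, Fin.castSucc⟩

/-- The graph `Γ₂` of Example 5.5: two parallel edges `f₁, f₂ : v₁ → v₂`. -/
abbrev Γ2ex : DGraph := ⟨Fin 2, Fin 2, fun _ => 1, fun _ => 0⟩

open DGraph in
/-- The inverse dynamical Cuntz--Krieger `Γ₁`-family in `G_{Γ₂}` of
Example 5.5. -/
noncomputable def Ωex : Γ1ex.V → Set (BPath Γ2ex) := fun u =>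
  if u = 0 then cylV Γ2ex 0
  else if u = 1 then cyl Γ2ex (ofEdge Γ2ex 0)
  else cyl Γ2ex (ofEdge Γ2ex 1)

open DGraph in
/-- The bisections of the inverse family of Example 5.5:
`T_{e₁} = Z(f₁, s(f₁))` and `T_{e₂} = Z(f₂, f₁)`. -/
noncomputable def Tex : Γ1ex.E → Set (GArrT Γ2ex) := fun e =>
  if e = 0 then ZZ Γ2ex (ofEdge Γ2ex 0) (ofVtx Γ2ex 0)
  else ZZ Γ2ex (ofEdge Γ2ex 1) (ofEdge Γ2ex 0)


section Aux
open DGraph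

lemma fin2cases (v : Fin 2) : v = 0 ∨ v = 1 := by revert v; decide

lemma sing0 : ¬ Γ2ex.Regular (0 : Fin 2) := by
  rintro ⟨-, e, he⟩
  exact (by decide : ((1 : Fin 2) = 0) → False) he

lemma reg1 : Γ2ex.Regular (1 : Fin 2) :=
  ⟨Set.toFinite _, ⟨0, rfl⟩⟩

/-- The three boundary paths of `Γ2ex`. -/
noncomputable def P0 : DGraph.BPath Γ2ex := .fin (ofVtx Γ2ex 0) sing0
noncomputable def P1 : DGraph.BPath Γ2ex := .fin (ofEdge Γ2ex 0) sing0
noncomputable def P2 : DGraph.BPath Γ2ex := .fin (ofEdge Γ2ex 1) sing0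

lemma finpath_ext {Γ : DGraph} {p q : DGraph.FinPath Γ}
    (h1 : p.edges = q.edges) (h2 : p.src = q.src) : p = q := by
  cases p; cases q; cases h1; cases h2; rfl

lemma bfin_eq {Γ : DGraph} {p q : DGraph.FinPath Γ} (hp : ¬ Γ.Regular p.src)
    (hq : ¬ Γ.Regular q.src) (h : p = q) :
    DGraph.BPath.fin p hp = DGraph.BPath.fin q hq := by
  cases h; rfl

lemma bpath_cases (z : DGraph.BPath Γ2ex) : z = P0 ∨ z = P1 ∨ z = P2 := by
  cases z with
  | inf p => exact ((by decide : ((0 : Fin 2) = 1) → False) (p.ok 0)).elim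
  | fin p hp =>
    obtain ⟨L, v, hc⟩ := p
    have hp' : ¬ Γ2ex.Regular v := hp
    have hv : v = 0 := by
      rcases fin2cases v with h | h
      · exact h
      · rw [h] at hp'; exact absurd reg1 hp'
    subst hv
    cases L with
    | nil => exact Or.inl (bfin_eq _ _ (finpath_ext rfl rfl))
    | cons e tl =>
      cases tl with
      | nil =>
        rcases fin2cases e with h | h <;> subst h
        · exact Or.inr (Or.inl (bfin_eq _ _ (finpath_ext rfl rfl)))
        · exact Or.inr (Or.inr (bfin_eq _ _ (finpath_ext rfl rfl)))
      | cons f tl' =>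
        exact ((by decide : ((0 : Fin 2) = 1) → False) hc.1).elim


def bedges : DGraph.BPath Γ2ex → List (Fin 2)
  | .fin p _ => p.edges
  | .inf _ => []

lemma P1_ne_P2 : P1 ≠ P2 := by
  intro h
  have h2 := congrArg bedges h
  simp only [bedges, P1, P2, ofEdge] at h2
  have h3 : (0 : Fin 2) = 1 := by injection h2
  exact (by decide : ¬ ((0 : Fin 2) = 1)) h3

lemma P0_ne_P1 : P0 ≠ P1 := by
  intro h
  have h2 := congrArg bedges h
  simp only [bedges, P0, P1, ofEdge, ofVtx] at h2
  exact List.cons_ne_nil _ _ h2.symm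

lemma P0_ne_P2 : P0 ≠ P2 := by
  intro h
  have h2 := congrArg bedges h
  simp only [bedges, P0, P2, ofEdge, ofVtx] at h2
  exact List.cons_ne_nil _ _ h2.symm

lemma cylV0 : cylV Γ2ex 0 = {P0} := by
  ext z
  constructor
  · intro h
    rcases bpath_cases z with rfl | rfl | rfl
    · rfl
    · exact ((by decide : ¬ (DGraph.BPath.rng Γ2ex P1 = 0)) h).elim
    · exact ((by decide : ¬ (DGraph.BPath.rng Γ2ex P2 = 0)) h).elim
  · rintro rfl; rfl

lemma cylV1 : cylV Γ2ex 1 = {P1, P2} := by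
  ext z
  constructor
  · intro h
    rcases bpath_cases z with rfl | rfl | rfl
    · exact ((by decide : ¬ (DGraph.BPath.rng Γ2ex P0 = 1)) h).elim
    · exact Or.inl rfl
    · exact Or.inr rfl
  · rintro (rfl | rfl) <;> rfl

lemma cylVtx0 : cyl Γ2ex (ofVtx Γ2ex 0) = {P0} := by
  ext z
  constructor
  · rintro ⟨z', h, rfl⟩
    rcases bpath_cases z' with rfl | rfl | rfl
    · rfl
    · exact absurd h (by decide)
    · exact absurd h (by decide)
  · rintro rfl; exact ⟨P0, rfl, rfl⟩

lemma cylF0 : cyl Γ2ex (ofEdge Γ2ex 0) = {P1} := by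
  ext z
  constructor
  · rintro ⟨z', h, rfl⟩
    rcases bpath_cases z' with rfl | rfl | rfl
    · rfl
    · exact absurd h (by decide)
    · exact absurd h (by decide)
  · rintro rfl; exact ⟨P0, rfl, rfl⟩

lemma cylF1 : cyl Γ2ex (ofEdge Γ2ex 1) = {P2} := by
  ext z
  constructor
  · rintro ⟨z', h, rfl⟩
    rcases bpath_cases z' with rfl | rfl | rfl
    · rfl
    · exact absurd h (by decide)
    · exact absurd h (by decide)
  · rintro rfl; exact ⟨P0, rfl, rfl⟩

lemma fin3cases (v : Fin 3) : v = 0 ∨ v = 1 ∨ v = 2 := by revert v; decide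

lemma Ωex0 : Ωex 0 = {P0} := by
  unfold Ωex; rw [if_pos rfl]; exact cylV0

lemma Ωex1 : Ωex 1 = {P1} := by
  unfold Ωex; rw [if_neg (by decide), if_pos rfl]; exact cylF0

lemma Ωex2 : Ωex 2 = {P2} := by
  unfold Ωex; rw [if_neg (by decide), if_neg (by decide)]; exact cylF1

/-- The arrow `(f₁, 1, v₁) ∈ Z(f₁, s(f₁))`. -/
noncomputable def A0 : DGraph.GArrT Γ2ex :=
  ⟨(P1, 1, P0), ofEdge Γ2ex 0, ofVtx Γ2ex 0, P0, rfl, rfl, rfl, rfl, by decide⟩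

/-- The arrow `(f₂, 0, f₁) ∈ Z(f₂, f₁)`. -/
noncomputable def A1 : DGraph.GArrT Γ2ex :=
  ⟨(P2, 0, P1), ofEdge Γ2ex 1, ofEdge Γ2ex 0, P0, rfl, rfl, rfl, rfl, by decide⟩

lemma ZZ0 : ZZ Γ2ex (ofEdge Γ2ex 0) (ofVtx Γ2ex 0) = {A0} := by
  ext t
  constructor
  · rintro ⟨z, hx, hy, ht⟩
    rcases bpath_cases z with rfl | rfl | rfl
    · exact Subtype.ext (by rw [ht]; rfl)
    · exact absurd hx (by decide)
    · exact absurd hx (by decide)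
  · rintro rfl
    exact ⟨P0, rfl, rfl, rfl⟩

lemma ZZ1 : ZZ Γ2ex (ofEdge Γ2ex 1) (ofEdge Γ2ex 0) = {A1} := by
  ext t
  constructor
  · rintro ⟨z, hx, hy, ht⟩
    rcases bpath_cases z with rfl | rfl | rfl
    · exact Subtype.ext (by rw [ht]; rfl)
    · exact absurd hx (by decide)
    · exact absurd hx (by decide)
  · rintro rfl
    exact ⟨P0, rfl, rfl, rfl⟩

lemma Tex0 : Tex 0 = {A0} := by
  unfold Tex; rw [if_pos rfl]; exact ZZ0

lemma Tex1 : Tex 1 = {A1} := by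
  unfold Tex; rw [if_neg (by decide)]; exact ZZ1

lemma isOpen_cyl (x : DGraph.FinPath Γ2ex) : IsOpen (cyl Γ2ex x) := by
  have h : cyl Γ2ex x = cyl Γ2ex x \ ⋃ y ∈ (∅ : Set (DGraph.FinPath Γ2ex)), cyl Γ2ex y := by
    simp
  rw [h]
  exact TopologicalSpace.GenerateOpen.basic _ ⟨x, ∅, Set.finite_empty, rfl⟩

lemma isOpen_P0 : IsOpen ({P0} : Set (DGraph.BPath Γ2ex)) := cylVtx0 ▸ isOpen_cyl _
lemma isOpen_P1 : IsOpen ({P1} : Set (DGraph.BPath Γ2ex)) := cylF0 ▸ isOpen_cyl _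
lemma isOpen_P2 : IsOpen ({P2} : Set (DGraph.BPath Γ2ex)) := cylF1 ▸ isOpen_cyl _

lemma singleton_arr_open (t : DGraph.GArrT Γ2ex)
    (h1 : IsOpen ({t.val.1} : Set (DGraph.BPath Γ2ex)))
    (h2 : IsOpen ({t.val.2.2} : Set (DGraph.BPath Γ2ex))) :
    IsOpen ({t} : Set (DGraph.GArrT Γ2ex)) := by
  have he : ({t} : Set (DGraph.GArrT Γ2ex)) =
      Subtype.val ⁻¹' ({t.val.1} ×ˢ ({t.val.2.1} ×ˢ {t.val.2.2})) := by
    ext s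
    simp only [Set.mem_singleton_iff, Set.mem_preimage, Set.mem_prod,
      Set.mem_singleton_iff]
    constructor
    · rintro rfl; exact ⟨rfl, rfl, rfl⟩
    · rintro ⟨ha, hb, hc⟩
      exact Subtype.ext (Prod.ext ha (Prod.ext hb hc))
  rw [he]
  exact ((h1.prod ((isOpen_discrete _).prod h2))).preimage continuous_subtype_val

lemma isOpen_A0 : IsOpen ({A0} : Set (DGraph.GArrT Γ2ex)) :=
  singleton_arr_open A0 isOpen_P1 isOpen_P0

lemma isOpen_A1 : IsOpen ({A1} : Set (DGraph.GArrT Γ2ex)) :=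
  singleton_arr_open A1 isOpen_P2 isOpen_P1

lemma sdisj {α : Type*} {a b : α} (h : a ≠ b) : ({a} : Set α) ∩ {b} = ∅ := by
  ext z
  simp only [Set.mem_inter_iff, Set.mem_singleton_iff, Set.mem_empty_iff_false, iff_false]
  rintro ⟨rfl, rfl⟩
  exact h rfl

end Aux


open DGraph in
/-- The family `Ω_{u₁} = Z_{v₁}`, `Ω_{u₂} = Z_{f₁}`, `Ω_{u₃} = Z_{f₂}`,
`T_{e₁} = Z(f₁, s(f₁))`, `T_{e₂} = Z(f₂, f₁)` is a nondegenerate dynamical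
Cuntz--Krieger `Γ₁`-family in the boundary path groupoid `G_{Γ₂}`; it violates
condition (a) of Theorem 4.1 (`Z_{v₂} ∩ Ω_{u₂} = Z_{f₁}` is neither empty nor all
of `Z_{v₂}`), and hence it does not arise from an admissible relation morphism. -/
theorem inverse_family_not_from_relation :
    IsDCKb Γ2ex Γ1ex Ωex Tex ∧
    (⋃ u, Ωex u) = Set.univ ∧
    cylV Γ2ex 1 ∩ Ωex 1 = cyl Γ2ex (ofEdge Γ2ex 0) ∧
    ¬ (cylV Γ2ex 1 ∩ Ωex 1 = ∅ ∨ cylV Γ2ex 1 ∩ Ωex 1 = cylV Γ2ex 1) ∧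
    ¬ ∃ R : Set (FinPath Γ2ex × FinPath Γ1ex), IsAdmissible Γ2ex Γ1ex R ∧
        (∀ u, Ωex u = relΩ Γ2ex Γ1ex R u) ∧ (∀ e, Tex e = relT Γ2ex Γ1ex R e) := by
  refine ⟨⟨?_, ?_, ?_, ?_, ?_, ?_, ?_, ?_, ?_, ?_, ?_⟩, ?_, ?_, ?_, ?_⟩
  · -- compact_Ω
    intro v
    rcases fin3cases v with rfl | rfl | rfl
    · rw [Ωex0]; exact isCompact_singleton
    · rw [Ωex1]; exact isCompact_singleton
    · rw [Ωex2]; exact isCompact_singleton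
  · -- open_Ω
    intro v
    rcases fin3cases v with rfl | rfl | rfl
    · rw [Ωex0]; exact isOpen_P0
    · rw [Ωex1]; exact isOpen_P1
    · rw [Ωex2]; exact isOpen_P2
  · -- compact_T
    intro f
    rcases fin2cases f with rfl | rfl
    · rw [Tex0]; exact isCompact_singleton
    · rw [Tex1]; exact isCompact_singleton
  · -- open_T
    intro f
    rcases fin2cases f with rfl | rfl
    · rw [Tex0]; exact isOpen_A0
    · rw [Tex1]; exact isOpen_A1
  · -- inj_r
    intro f
    rcases fin2cases f with rfl | rfl
    · rw [Tex0]; exact Set.subsingleton_singleton.injOn _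
    · rw [Tex1]; exact Set.subsingleton_singleton.injOn _
  · -- inj_s
    intro f
    rcases fin2cases f with rfl | rfl
    · rw [Tex0]; exact Set.subsingleton_singleton.injOn _
    · rw [Tex1]; exact Set.subsingleton_singleton.injOn _
  · -- disj
    intro v w hvw
    rcases fin3cases v with rfl | rfl | rfl <;> rcases fin3cases w with rfl | rfl | rfl <;>
      simp only [Ωex0, Ωex1, Ωex2] <;>
      first
        | exact absurd rfl hvw
        | exact sdisj P0_ne_P1
        | exact sdisj P0_ne_P2
        | exact sdisj P1_ne_P2
        | exact sdisj (Ne.symm P0_ne_P1)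
        | exact sdisj (Ne.symm P0_ne_P2)
        | exact sdisj (Ne.symm P1_ne_P2)
  · -- src_eq
    intro f
    rcases fin2cases f with rfl | rfl
    · show gsrc Γ2ex '' Tex 0 = Ωex 0
      rw [Tex0, Set.image_singleton, Ωex0]
      rfl
    · show gsrc Γ2ex '' Tex 1 = Ωex 1
      rw [Tex1, Set.image_singleton, Ωex1]
      rfl
  · -- rng_sub
    intro f
    rcases fin2cases f with rfl | rfl
    · show grng Γ2ex '' Tex 0 ⊆ Ωex 1
      rw [Tex0, Set.image_singleton, Ωex1]
      exact subset_rfl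
    · show grng Γ2ex '' Tex 1 ⊆ Ωex 2
      rw [Tex1, Set.image_singleton, Ωex2]
      exact subset_rfl
  · -- rng_disj
    intro f g hfg
    rcases fin2cases f with rfl | rfl <;> rcases fin2cases g with rfl | rfl
    · exact absurd rfl hfg
    · rw [Tex0, Tex1, Set.image_singleton, Set.image_singleton]
      exact sdisj P1_ne_P2
    · rw [Tex0, Tex1, Set.image_singleton, Set.image_singleton]
      exact sdisj (Ne.symm P1_ne_P2)
    · exact absurd rfl hfg
  · -- reg
    intro v hv
    rcases fin3cases v with rfl | rfl | rfl
    · obtain ⟨-, e, he⟩ := hv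
      rcases fin2cases e with rfl | rfl
      · exact absurd he (by decide)
      · exact absurd he (by decide)
    · have hset : {f : Fin 2 | Γ1ex.r f = 1} = {0} := by
        ext f
        simp only [Set.mem_setOf_eq, Set.mem_singleton_iff]
        constructor
        · intro h
          rcases fin2cases f with rfl | rfl
          · rfl
          · exact absurd h (by decide)
        · rintro rfl; decide
      rw [hset, Set.biUnion_singleton, Tex0, Set.image_singleton, Ωex1]
      rfl
    · have hset : {f : Fin 2 | Γ1ex.r f = 2} = {1} := by
        ext f
        simp only [Set.mem_setOf_eq, Set.mem_singleton_iff]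
        constructor
        · intro h
          rcases fin2cases f with rfl | rfl
          · exact absurd h (by decide)
          · rfl
        · rintro rfl; decide
      rw [hset, Set.biUnion_singleton, Tex1, Set.image_singleton, Ωex2]
      rfl
  · -- the union is everything
    ext z
    simp only [Set.mem_iUnion, Set.mem_univ, iff_true]
    rcases bpath_cases z with rfl | rfl | rfl
    · exact ⟨0, by rw [Ωex0]; exact rfl⟩
    · exact ⟨1, by rw [Ωex1]; exact rfl⟩
    · exact ⟨2, by rw [Ωex2]; exact rfl⟩
  · -- Z_{v₂} ∩ Ω_{u₂} = Z_{f₁}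
    rw [cylV1, Ωex1, cylF0]
    ext z
    simp only [Set.mem_inter_iff, Set.mem_insert_iff, Set.mem_singleton_iff]
    constructor
    · exact fun h => h.2
    · rintro rfl; exact ⟨Or.inl rfl, rfl⟩
  · -- condition (a) fails
    rintro (h | h)
    · have hmem : P1 ∈ cylV Γ2ex 1 ∩ Ωex 1 := by
        rw [cylV1, Ωex1]; exact ⟨Or.inl rfl, rfl⟩
      rw [h] at hmem
      exact hmem
    · have h2 : P2 ∈ cylV Γ2ex 1 := by rw [cylV1]; exact Or.inr rfl
      rw [← h] at h2
      have h3 := h2.2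
      rw [Ωex1] at h3
      exact P1_ne_P2 (Set.mem_singleton_iff.mp h3).symm
  · -- not from a relation morphism
    rintro ⟨R, -, hΩ, -⟩
    have h1 := hΩ 1
    have hP1 : P1 ∈ relΩ Γ2ex Γ1ex R 1 := by rw [← h1, Ωex1]; exact rfl
    simp only [relΩ, Set.mem_iUnion, Set.mem_setOf_eq] at hP1
    obtain ⟨u, hu, hru⟩ := hP1
    have hu1 : u = 1 := (show DGraph.BPath.rng Γ2ex P1 = u from hru).symm
    subst hu1
    have hP2 : P2 ∈ relΩ Γ2ex Γ1ex R 1 := Set.mem_biUnion hu rfl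
    rw [← h1, Ωex1] at hP2
    exact P1_ne_P2 (Set.mem_singleton_iff.mp hP2).symm
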